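/- The PLS shrinkage factor at the smallest positive eigenvalue satisfies 0 ≤ f^(m)(λ_p) < 1, where f^(m)(λ) = 1 - ∏_{j=1}^m (1 - λ/μ_j^(m)). This follows because the smallest eigenvalue μ_m^(m) of T^(m) satisfies λ_p < μ_m^(m), so g^(m) = 1 - f^(m) maps λ_p into (0,1]. -/

import Mathlib

open Matrix

/-- The Krylov space `K^(m)(A, b) = span(b, Ab, ..., A^{m-1} b)`. -/
def Krylov {p : ℕ} (A : Matrix (Fin p) (Fin p) ℝ) (b : Fin p → ℝ) (m : ℕ) :
    Submodule ℝ (Fin p → ℝ) :=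
  Submodule.span ℝ {v | ∃ j < m, v = (A ^ j).mulVec b}

lemma pow_mem_krylov {p : ℕ} (A : Matrix (Fin p) (Fin p) ℝ) (b : Fin p → ℝ) {j m : ℕ}
    (h : j < m) : (A ^ j).mulVec b ∈ Krylov A b m :=
  Submodule.subset_span ⟨j, h, rfl⟩

lemma krylov_stop {p m : ℕ} (A : Matrix (Fin p) (Fin p) ℝ) (b : Fin p → ℝ)
    (hmem : (A ^ m).mulVec b ∈ Krylov A b m) :
    ∀ j, (A ^ j).mulVec b ∈ Krylov A b m := by
  have hmap : ∀ x ∈ Krylov A b m, A.mulVec x ∈ Krylov A b m := by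
    intro x hx
    induction hx using Submodule.span_induction with
    | mem x hx =>
      obtain ⟨j, hj, rfl⟩ := hx
      rw [Matrix.mulVec_mulVec, ← pow_succ']
      rcases lt_or_eq_of_le (Nat.succ_le_of_lt hj) with h | h
      · exact pow_mem_krylov A b h
      · rw [← Nat.succ_eq_add_one, h]; exact hmem
    | zero => simp
    | add x y _ _ hx hy => simpa [Matrix.mulVec_add] using Submodule.add_mem _ hx hy
    | smul c x _ hx => simpa [Matrix.mulVec_smul] using Submodule.smul_mem _ c hx
  intro j
  induction j with
  | zero =>
    rcases Nat.eq_zero_or_pos m with h | h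
    · subst h; exact hmem
    · exact pow_mem_krylov A b h
  | succ j ih =>
    have := hmap _ ih
    rwa [Matrix.mulVec_mulVec, ← pow_succ'] at this

/-- linear independence of `b, Ab, ..., A^m b` when `dim K^m = m` and `A^m b ∉ K^m`. -/
lemma krylov_linearIndependent {p m : ℕ} (A : Matrix (Fin p) (Fin p) ℝ) (b : Fin p → ℝ)
    (hdim : Module.finrank ℝ (Krylov A b m) = m)
    (hnot : (A ^ m).mulVec b ∉ Krylov A b m) :
    LinearIndependent ℝ (fun j : Fin (m + 1) => (A ^ (j : ℕ)).mulVec b) := by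
  have hset : Set.range (fun j : Fin (m + 1) => (A ^ (j : ℕ)).mulVec b)
      = {v | ∃ j < m + 1, v = (A ^ j).mulVec b} := by
    ext v
    constructor
    · rintro ⟨j, rfl⟩; exact ⟨j, j.isLt, rfl⟩
    · rintro ⟨j, hj, rfl⟩; exact ⟨⟨j, hj⟩, rfl⟩
  have hspan : Submodule.span ℝ (Set.range (fun j : Fin (m + 1) => (A ^ (j : ℕ)).mulVec b))
      = Krylov A b (m + 1) := by rw [hset]; rfl
  rw [linearIndependent_iff_card_eq_finrank_span]
  have hle : Krylov A b m ≤ Krylov A b (m + 1) :=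
    Submodule.span_mono (fun _ ⟨j, hj, e⟩ => ⟨j, Nat.lt_succ_of_lt hj, e⟩)
  have hlt : Krylov A b m < Krylov A b (m + 1) :=
    lt_of_le_of_ne hle (fun h => hnot (h ▸ Submodule.subset_span ⟨m, Nat.lt_succ_self m, rfl⟩))
  have h1 : m < Module.finrank ℝ (Krylov A b (m + 1)) := by
    have := Submodule.finrank_lt_finrank_of_lt hlt
    rwa [hdim] at this
  have h2 : Module.finrank ℝ (Krylov A b (m + 1)) ≤ m + 1 := by
    rw [← hspan]
    exact (finrank_range_le_card _).trans (by simp)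
  rw [Set.finrank, hspan]
  simp only [Fintype.card_fin]
  omega

/-- An eigenvector of `A` with nonzero eigenvalue lying in `K^m` must vanish
(when `dim K^m = m` and `A^m b ∉ K^m`). -/
lemma krylov_no_eigenvector {p m : ℕ} (A : Matrix (Fin p) (Fin p) ℝ) (b : Fin p → ℝ)
    (hdim : Module.finrank ℝ (Krylov A b m) = m)
    (hnot : (A ^ m).mulVec b ∉ Krylov A b m)
    (lp : ℝ) (hlp : lp ≠ 0) (x : Fin p → ℝ) (hx : x ∈ Krylov A b m)
    (heig : A.mulVec x = lp • x) : x = 0 := by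
  classical
  have hsetm : Set.range (fun j : Fin m => (A ^ (j : ℕ)).mulVec b)
      = {v | ∃ j < m, v = (A ^ j).mulVec b} := by
    ext v
    constructor
    · rintro ⟨j, rfl⟩; exact ⟨j, j.isLt, rfl⟩
    · rintro ⟨j, hj, rfl⟩; exact ⟨⟨j, hj⟩, rfl⟩
  have hx' : x ∈ Submodule.span ℝ (Set.range (fun j : Fin m => (A ^ (j : ℕ)).mulVec b)) := by
    rw [hsetm]; exact hx
  obtain ⟨c, hc⟩ := (Submodule.mem_span_range_iff_exists_fun ℝ).mp hx'
  -- extended coefficients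
  set cc : ℕ → ℝ := fun j => if h : j < m then c ⟨j, h⟩ else 0 with hcc
  set d : Fin (m + 1) → ℝ :=
    fun i => (if (i : ℕ) = 0 then 0 else cc ((i : ℕ) - 1)) - lp * cc (i : ℕ) with hd
  have hsum : ∑ i : Fin (m + 1), d i • (A ^ (i : ℕ)).mulVec b = 0 := by
    have hsplit : ∑ i : Fin (m + 1), d i • (A ^ (i : ℕ)).mulVec b
        = (∑ i : Fin (m + 1),
            (if (i : ℕ) = 0 then (0:ℝ) else cc ((i : ℕ) - 1)) • (A ^ (i : ℕ)).mulVec b)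
          - ∑ i : Fin (m + 1), (lp * cc (i : ℕ)) • (A ^ (i : ℕ)).mulVec b := by
      rw [← Finset.sum_sub_distrib]
      refine Finset.sum_congr rfl fun i _ => ?_
      rw [hd, sub_smul]
    have hS1 : (∑ i : Fin (m + 1),
          (if (i : ℕ) = 0 then (0:ℝ) else cc ((i : ℕ) - 1)) • (A ^ (i : ℕ)).mulVec b)
        = A.mulVec x := by
      rw [Fin.sum_univ_succ, ← hc]
      conv_rhs => rw [← Matrix.mulVecLin_apply, map_sum]
      simp only [Fin.val_zero, reduceIte, zero_smul, zero_add, Fin.val_succ,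
        Nat.add_sub_cancel]
      refine Finset.sum_congr rfl fun j _ => ?_
      rw [if_neg (Nat.succ_ne_zero _), _root_.map_smul, Matrix.mulVecLin_apply,
        Matrix.mulVec_mulVec, ← pow_succ']
      congr 2
      simp [hcc]
    have hS2 : (∑ i : Fin (m + 1), (lp * cc (i : ℕ)) • (A ^ (i : ℕ)).mulVec b)
        = lp • x := by
      rw [Fin.sum_univ_castSucc]
      have hccm : cc m = 0 := dif_neg (lt_irrefl m)
      simp only [Fin.val_last, hccm, mul_zero, zero_smul, add_zero, Fin.coe_castSucc]
      rw [← hc, Finset.smul_sum]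
      refine Finset.sum_congr rfl fun j _ => ?_
      rw [smul_smul]
      congr 2
      simp [hcc]
    rw [hsplit, hS1, hS2, heig, sub_self]
  have hLI := krylov_linearIndependent A b hdim hnot
  have hd0 : ∀ i, d i = 0 := Fintype.linearIndependent_iff.mp hLI d hsum
  have hcc0 : ∀ j, cc j = 0 := by
    intro j
    induction j with
    | zero =>
      have h := hd0 ⟨0, Nat.succ_pos m⟩
      simp [hd, hlp, sub_eq_zero] at h
      exact h
    | succ j ih =>
      by_cases h : j + 1 < m
      · have h2 := hd0 ⟨j + 1, by omega⟩
        simp [hd, ih, hlp, sub_eq_zero] at h2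
        exact h2
      · exact dif_neg h
  have hc0 : ∀ j : Fin m, c j = 0 := by
    intro j
    have h := hcc0 (j : ℕ)
    simpa [hcc] using h
  rw [← hc]
  refine Finset.sum_eq_zero fun j _ => by rw [hc0 j, zero_smul]


/-- the PLS shrinkage factor at the smallest eigenvalue `λ_p > 0` of `A`
satisfies `0 ≤ f^(m)(λ_p) < 1`, where `f^(m)(λ) = 1 - ∏ⱼ (1 - λ/μⱼ^(m))` with `μⱼ^(m)` the
eigenvalues of `T^(m) = (W^(m))ᵗ A W^(m)`, `W^(m)` an orthonormal basis of the
`m`-dimensional Krylov space `K^(m)(A,b)`, and `m < m*` (with `m*` the maximal Krylov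
dimension). -/
theorem pls_shrinkage_factor_smallest_eigenvalue {p m : ℕ}
    (A : Matrix (Fin p) (Fin p) ℝ) (hA : A.PosSemidef) (b : Fin p → ℝ)
    (hAh : A.IsHermitian)
    (lp : ℝ) (hlp_min : ∀ i, lp ≤ hAh.eigenvalues i) (hlp_mem : ∃ i, hAh.eigenvalues i = lp)
    (hlp_pos : 0 < lp)
    (hdim : Module.finrank ℝ (Krylov A b m) = m)
    (mstar : ℕ) (hmstar : mstar = Module.finrank ℝ (Krylov A b p)) (hm : m < mstar)
    (W : Matrix (Fin p) (Fin m) ℝ) (hWorth : Wᵀ * W = 1)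
    (hWspan : Submodule.span ℝ (Set.range Wᵀ) = Krylov A b m)
    (T : Matrix (Fin m) (Fin m) ℝ) (hT : T = Wᵀ * A * W) (hTh : T.IsHermitian)
    (f : ℝ → ℝ) (hf : ∀ x : ℝ, f x = 1 - ∏ j, (1 - x / hTh.eigenvalues j)) :
    0 ≤ f lp ∧ f lp < 1 := by
  -- A^m b ∉ K^m
  have hnot : (A ^ m).mulVec b ∉ Krylov A b m := by
    intro hmem
    have hle : Krylov A b p ≤ Krylov A b m :=
      Submodule.span_le.2 (fun v ⟨j, hj, e⟩ => e ▸ krylov_stop A b hmem j)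
    have := Submodule.finrank_mono hle
    omega
  -- A - lp • 1 is positive semidefinite
  have hB : (A - lp • (1 : Matrix (Fin p) (Fin p) ℝ)).PosSemidef := by
    have hU : (hAh.eigenvectorUnitary : Matrix (Fin p) (Fin p) ℝ)
        * star (hAh.eigenvectorUnitary : Matrix (Fin p) (Fin p) ℝ) = 1 :=
      Matrix.mem_unitaryGroup_iff.mp hAh.eigenvectorUnitary.2
    have key : A - lp • (1 : Matrix (Fin p) (Fin p) ℝ)
        = (hAh.eigenvectorUnitary : Matrix (Fin p) (Fin p) ℝ)
          * diagonal (fun i => hAh.eigenvalues i - lp)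
          * (hAh.eigenvectorUnitary : Matrix (Fin p) (Fin p) ℝ)ᴴ := by
      have hspec := hAh.spectral_theorem
      rw [Unitary.conjStarAlgAut_apply] at hspec
      rw [← Matrix.star_eq_conjTranspose]
      have hdg : diagonal (fun i => hAh.eigenvalues i - lp)
          = diagonal (RCLike.ofReal ∘ hAh.eigenvalues) - lp • (1 : Matrix (Fin p) (Fin p) ℝ) := by
        rw [Matrix.smul_one_eq_diagonal, diagonal_sub]
        rfl
      rw [hdg, Matrix.mul_sub, Matrix.sub_mul, ← hspec]
      congr 1
      rw [Matrix.mul_smul, Matrix.smul_mul, Matrix.mul_one, hU]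
    rw [key]
    exact (Matrix.posSemidef_diagonal_iff.mpr
      fun i => sub_nonneg.2 (hlp_min i)).mul_mul_conjTranspose_same _
  -- every eigenvalue of T is strictly above lp
  have hmu : ∀ j : Fin m, lp < hTh.eigenvalues j := by
    intro j
    set x : Fin p → ℝ := W.mulVec (hTh.eigenvectorBasis j) with hxdef
    have hvv : (⇑(hTh.eigenvectorBasis j) : Fin m → ℝ) ⬝ᵥ ⇑(hTh.eigenvectorBasis j) = 1 := by
      have hnorm := hTh.eigenvectorBasis.orthonormal.1 j
      have h2 : (inner ℝ (hTh.eigenvectorBasis j) (hTh.eigenvectorBasis j) : ℝ) = 1 := by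
        rw [real_inner_self_eq_norm_mul_norm, hnorm, mul_one]
      rw [← h2, PiLp.inner_apply]
      simp only [dotProduct, RCLike.inner_apply, conj_trivial, mul_comm]
    have hxx : x ⬝ᵥ x = 1 := by
      show (W.mulVec (⇑(hTh.eigenvectorBasis j)))
          ⬝ᵥ (W.mulVec (⇑(hTh.eigenvectorBasis j))) = 1
      rw [Matrix.dotProduct_mulVec, Matrix.vecMul_mulVec, hWorth, Matrix.vecMul_one, hvv]
    have hxAx : x ⬝ᵥ (A.mulVec x) = hTh.eigenvalues j := by
      show (W.mulVec (⇑(hTh.eigenvectorBasis j)))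
          ⬝ᵥ (A.mulVec (W.mulVec (⇑(hTh.eigenvectorBasis j)))) = hTh.eigenvalues j
      rw [Matrix.dotProduct_mulVec, Matrix.dotProduct_mulVec, Matrix.vecMul_mulVec,
        Matrix.vecMul_vecMul, ← hT]
      have hTt : Tᵀ = T := (Matrix.conjTranspose_eq_transpose_of_trivial T) ▸ hTh.eq
      have hvT : ∀ w : Fin m → ℝ, w ᵥ* T = T *ᵥ w := by
        intro w; nth_rewrite 1 [← hTt]; exact Matrix.vecMul_transpose T w
      rw [hvT, hTh.mulVec_eigenvectorBasis]
      simp [hvv]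
    -- quadratic form of B at x
    have hq : x ⬝ᵥ ((A - lp • (1 : Matrix (Fin p) (Fin p) ℝ)).mulVec x)
        = hTh.eigenvalues j - lp := by
      rw [Matrix.sub_mulVec, Matrix.smul_mulVec, Matrix.one_mulVec,
        dotProduct_sub, hxAx, dotProduct_smul, hxx]
      simp
    have hstar : star x = x := by
      funext i; simp
    have hge : lp ≤ hTh.eigenvalues j := by
      have := hB.dotProduct_mulVec_nonneg x
      rw [hstar, hq] at this
      linarith [this]
    rcases lt_or_eq_of_le hge with h | h
    · exact h
    -- equality case: x is an eigenvector of A in K^m, contradiction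
    exfalso
    have hq0 : star x ⬝ᵥ ((A - lp • (1 : Matrix (Fin p) (Fin p) ℝ)).mulVec x) = 0 := by
      rw [hstar, hq, ← h, sub_self]
    have hBx := (hB.dotProduct_mulVec_zero_iff x).mp hq0
    have heig : A.mulVec x = lp • x := by
      rw [Matrix.sub_mulVec, Matrix.smul_mulVec, Matrix.one_mulVec, sub_eq_zero] at hBx
      exact hBx
    have hxK : x ∈ Krylov A b m := by
      have hxsum : x = ∑ k : Fin m, (hTh.eigenvectorBasis j) k • Wᵀ k := by
        funext i
        simp [hxdef, Matrix.mulVec, dotProduct, Matrix.transpose_apply, mul_comm]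
      rw [hxsum, ← hWspan]
      exact Submodule.sum_mem _ fun k _ =>
        Submodule.smul_mem _ _ (Submodule.subset_span ⟨k, rfl⟩)
    have hx0 : x = 0 := krylov_no_eigenvector A b hdim hnot lp (ne_of_gt hlp_pos) x hxK heig
    rw [hx0] at hxx
    simp at hxx
  -- conclude
  have hmupos : ∀ j : Fin m, 0 < hTh.eigenvalues j := fun j => lt_trans hlp_pos (hmu j)
  have hprodpos : 0 < ∏ j, (1 - lp / hTh.eigenvalues j) := by
    apply Finset.prod_pos
    intro j _
    have : lp / hTh.eigenvalues j < 1 := (div_lt_one (hmupos j)).mpr (hmu j)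
    linarith
  have hprodle : (∏ j, (1 - lp / hTh.eigenvalues j)) ≤ 1 := by
    apply Finset.prod_le_one
    · intro j _
      have : lp / hTh.eigenvalues j < 1 := (div_lt_one (hmupos j)).mpr (hmu j)
      linarith
    · intro j _
      have : 0 ≤ lp / hTh.eigenvalues j := div_nonneg (le_of_lt hlp_pos) (le_of_lt (hmupos j))
      linarith
  rw [hf]
  constructor
  · linarith
  · linarith
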